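/- arXiv:0912.4444 — 5 statements merged into one kernel-verified Lean document; each statement's English description precedes it below -/
import Mathlib

section
/- Under the same hypotheses, u(x,λ) J u(x, λ̄)* = j for all x ∈ [0,T] and λ ∈ ℂ. -/
open Set Matrix

attribute [local instance] Matrix.normedAddCommGroup Matrix.normedSpace

section Helpers
variable {m n p : Type*} [Fintype m] [Fintype n] [Fintype p]

theorem matDeriv_iff {f : ℝ → Matrix m n ℂ} {f' : Matrix m n ℂ} {s : Set ℝ} {x : ℝ} :
    HasDerivWithinAt f f' s x ↔ ∀ i j, HasDerivWithinAt (fun t => f t i j) (f' i j) s x := by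
  exact hasDerivWithinAt_pi.trans (forall_congr' fun i => hasDerivWithinAt_pi)

theorem matmul_deriv {f : ℝ → Matrix m n ℂ} {g : ℝ → Matrix n p ℂ} {f' g'} {s : Set ℝ} {x : ℝ}
    (hf : HasDerivWithinAt f f' s x) (hg : HasDerivWithinAt g g' s x) :
    HasDerivWithinAt (fun t => f t * g t) (f' * g x + f x * g') s x := by
  rw [matDeriv_iff] at *
  intro i j
  simp only [Matrix.mul_apply, Matrix.add_apply]
  rw [← Finset.sum_add_distrib]
  exact HasDerivWithinAt.fun_sum fun k _ => ((hf i k).mul (hg k j)).congr_deriv (by ring)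

theorem matstar_deriv {f : ℝ → Matrix m n ℂ} {f'} {s : Set ℝ} {x : ℝ}
    (hf : HasDerivWithinAt f f' s x) :
    HasDerivWithinAt (fun t => (f t)ᴴ) f'ᴴ s x := by
  rw [matDeriv_iff] at *
  intro i j
  simpa [Matrix.conjTranspose_apply] using (hf j i).star

theorem matnorm_mul_le (M : Matrix m n ℂ) (N : Matrix n p ℂ) :
    ‖M * N‖ ≤ (Fintype.card n : ℝ) * ‖M‖ * ‖N‖ := by
  rw [Matrix.norm_le_iff (by positivity)]
  intro i j
  rw [Matrix.mul_apply]
  calc ‖∑ k, M i k * N k j‖ ≤ ∑ k, ‖M i k * N k j‖ := norm_sum_le _ _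
    _ ≤ ∑ _k : n, ‖M‖ * ‖N‖ := Finset.sum_le_sum fun k _ => by
        rw [norm_mul]
        exact mul_le_mul (Matrix.norm_entry_le_entrywise_sup_norm M)
          (Matrix.norm_entry_le_entrywise_sup_norm N) (norm_nonneg _) (norm_nonneg _)
    _ = (Fintype.card n : ℝ) * ‖M‖ * ‖N‖ := by
        simp [Finset.sum_const, mul_assoc]

end Helpers

theorem stmt_3 {r : ℕ} (hr : 0 < r) {T : ℝ} (hT : 0 < T)
    (v : ℝ → Matrix (Fin r) (Fin r) ℂ) (hv : ContinuousOn v (Icc 0 T))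
    (jm Jm Q : Matrix (Fin r ⊕ Fin r) (Fin r ⊕ Fin r) ℂ)
    (hj : jm = Matrix.fromBlocks (1 : Matrix (Fin r) (Fin r) ℂ) 0 0 (-1))
    (hJ : Jm = Matrix.fromBlocks (0 : Matrix (Fin r) (Fin r) ℂ) 1 1 0)
    (hQ : Q = ((Real.sqrt 2 : ℂ))⁻¹ • Matrix.fromBlocks 1 (-1) 1 1)
    (u u' : ℂ → ℝ → Matrix (Fin r ⊕ Fin r) (Fin r ⊕ Fin r) ℂ)
    (hder : ∀ lam : ℂ, ∀ x ∈ Icc (0:ℝ) T, HasDerivWithinAt (u lam) (u' lam x) (Icc 0 T) x)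
    (hcont : ∀ lam : ℂ, ContinuousOn (u' lam) (Icc 0 T))
    (heq : ∀ lam : ℂ, ∀ x ∈ Icc (0:ℝ) T,
      (-Complex.I) • (jm * u' lam x)
        = lam • u lam x + Matrix.fromBlocks 0 (v x) (v x)ᴴ 0 * u lam x)
    (hinit : ∀ lam : ℂ, u lam 0 = Qᴴ) :
    ∀ lam : ℂ, ∀ x ∈ Icc (0:ℝ) T,
      u lam x * Jm * (u (starRingEnd ℂ lam) x)ᴴ = jm := by
  intro lam
  set lam' : ℂ := starRingEnd ℂ lam with hlam'
  set V : ℝ → Matrix (Fin r ⊕ Fin r) (Fin r ⊕ Fin r) ℂ :=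
    fun x => Matrix.fromBlocks 0 (v x) (v x)ᴴ 0 with hVdef
  have hjj : jm * jm = 1 := by
    rw [hj]
    simp [Matrix.fromBlocks_multiply, ← Matrix.fromBlocks_one]
  have hjH : jmᴴ = jm := by
    rw [hj]
    simp [Matrix.fromBlocks_conjTranspose]
  have hVH : ∀ x, (V x)ᴴ = V x := by
    intro x
    simp [hVdef, Matrix.fromBlocks_conjTranspose]
  -- formula for the derivative
  have hu' : ∀ mu : ℂ, ∀ x ∈ Icc (0:ℝ) T,
      u' mu x = (Complex.I • (mu • jm + jm * V x)) * u mu x := by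
    intro mu x hx
    have h2 := congrArg (fun M => Complex.I • (jm * M)) (heq mu x hx)
    simp only [Matrix.mul_smul, smul_smul, mul_neg, Complex.I_mul_I, neg_neg, one_smul,
      ← Matrix.mul_assoc, hjj, Matrix.one_mul] at h2
    rw [h2]
    simp [hVdef, Matrix.smul_mul, Matrix.add_mul, Matrix.mul_smul, Matrix.mul_assoc, Matrix.mul_add]
  set A : ℝ → Matrix (Fin r ⊕ Fin r) (Fin r ⊕ Fin r) ℂ :=
    fun x => Complex.I • (lam • jm + jm * V x) with hAdef
  set B : ℝ → Matrix (Fin r ⊕ Fin r) (Fin r ⊕ Fin r) ℂ :=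
    fun x => (-Complex.I) • (lam • jm + V x * jm) with hBdef
  have hBA : ∀ x, (Complex.I • (lam' • jm + jm * V x))ᴴ = B x := by
    intro x
    rw [Matrix.conjTranspose_smul, Matrix.conjTranspose_add, Matrix.conjTranspose_smul,
      Matrix.conjTranspose_mul, hVH, hjH]
    simp [hBdef, hlam', Complex.conj_I, Complex.conj_conj]
  have hAB : ∀ x, A x * jm + jm * B x = 0 := by
    intro x
    have e1 : A x * jm = Complex.I • (lam • 1 + jm * V x * jm) := by
      rw [hAdef]
      simp [Matrix.smul_mul, Matrix.add_mul, hjj, Matrix.mul_assoc]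
    have e2 : jm * B x = (-Complex.I) • (lam • 1 + jm * V x * jm) := by
      rw [hBdef]
      simp only [Matrix.mul_smul, Matrix.mul_add, Matrix.mul_smul, hjj]
      rw [← Matrix.mul_assoc]
    rw [e1, e2, neg_smul, add_neg_cancel]
  set F : ℝ → Matrix (Fin r ⊕ Fin r) (Fin r ⊕ Fin r) ℂ :=
    fun x => u lam x * Jm * (u lam' x)ᴴ with hFdef
  set G : ℝ → Matrix (Fin r ⊕ Fin r) (Fin r ⊕ Fin r) ℂ := fun x => F x - jm with hGdef
  set G' : ℝ → Matrix (Fin r ⊕ Fin r) (Fin r ⊕ Fin r) ℂ :=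
    fun x => A x * G x + G x * B x with hG'def
  -- initial condition
  have hG0 : G 0 = 0 := by
    have hQJQ : Qᴴ * Jm * Q = jm := by
      subst hQ hJ hj
      rw [Matrix.conjTranspose_smul, Matrix.fromBlocks_conjTranspose]
      have hs : star (((Real.sqrt 2 : ℝ) : ℂ))⁻¹ = (((Real.sqrt 2 : ℝ) : ℂ))⁻¹ := by
        simp [star_inv₀, Complex.conj_ofReal]
      rw [hs]
      simp only [Matrix.smul_mul, Matrix.mul_smul, smul_smul, Matrix.fromBlocks_multiply]
      have h2 : (((Real.sqrt 2 : ℝ) : ℂ))⁻¹ * (((Real.sqrt 2 : ℝ) : ℂ))⁻¹ = (2 : ℂ)⁻¹ := by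
        rw [← mul_inv, ← Complex.ofReal_mul, Real.mul_self_sqrt (by norm_num : (0:ℝ) ≤ 2)]
        norm_num
      rw [h2]
      simp only [Matrix.conjTranspose_one, Matrix.conjTranspose_neg, Matrix.mul_one,
        Matrix.one_mul, Matrix.mul_zero, Matrix.zero_mul, Matrix.mul_neg, Matrix.neg_mul,
        add_zero, zero_add, neg_neg, neg_zero]
      rw [inv_smul_eq_iff₀ (two_ne_zero)]
      rw [Matrix.fromBlocks_smul, smul_neg, two_smul, smul_zero, neg_add]
      norm_num
    have h0 : (0:ℝ) ∈ Icc (0:ℝ) T := ⟨le_refl 0, le_of_lt hT⟩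
    simp [hGdef, hFdef, hinit, Matrix.conjTranspose_conjTranspose, hQJQ]
  -- derivative of G
  have hGder : ∀ x ∈ Icc (0:ℝ) T, HasDerivWithinAt G (G' x) (Icc 0 T) x := by
    intro x hx
    have h1 := hder lam x hx
    have h2 := hder lam' x hx
    have hc : HasDerivWithinAt (fun _ : ℝ => Jm) 0 (Icc 0 T) x := hasDerivWithinAt_const x _ Jm
    have hd := matmul_deriv (matmul_deriv h1 hc) (matstar_deriv h2)
    have hF_x : ∀ y : ℝ, F y = u lam y * Jm * (u lam' y)ᴴ := fun y => rfl
    have hG_x : ∀ y : ℝ, G y = F y - jm := fun y => rfl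
    have hG'_x : ∀ y : ℝ, G' y = A y * G y + G y * B y := fun y => rfl
    have hAj : A x * jm = -(jm * B x) := by
      rw [eq_neg_iff_add_eq_zero]; exact hAB x
    have hderiv_eq : (u' lam x * Jm + u lam x * 0) * (u lam' x)ᴴ +
        u lam x * Jm * (u' lam' x)ᴴ = G' x := by
      calc (u' lam x * Jm + u lam x * 0) * (u lam' x)ᴴ + u lam x * Jm * (u' lam' x)ᴴ
          = A x * u lam x * Jm * (u lam' x)ᴴ + u lam x * Jm * ((u lam' x)ᴴ * B x) := by
            rw [Matrix.mul_zero, add_zero, hu' lam x hx, hu' lam' x hx,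
              Matrix.conjTranspose_mul, hBA]
        _ = A x * (u lam x * Jm * (u lam' x)ᴴ) + (u lam x * Jm * (u lam' x)ᴴ) * B x := by
            simp only [Matrix.mul_assoc]
        _ = A x * (F x - jm) + (F x - jm) * B x := by
            rw [← hF_x x, Matrix.mul_sub, Matrix.sub_mul, hAj]
            abel
        _ = G' x := by rw [hG'_x, hG_x]
    have hG : HasDerivWithinAt G (G' x) (Icc 0 T) x := by
      rw [hGdef]
      have := hd.sub_const jm
      rwa [hderiv_eq] at this
    exact hG
  have hGcont : ContinuousOn G (Icc 0 T) := fun x hx => (hGder x hx).continuousWithinAt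
  -- bounds
  obtain ⟨C, hC⟩ := isCompact_Icc.exists_bound_of_continuousOn hv
  have hC0 : 0 ≤ C := le_trans (norm_nonneg _) (hC 0 ⟨le_refl 0, le_of_lt hT⟩)
  have hVnorm : ∀ x ∈ Icc (0:ℝ) T, ‖V x‖ ≤ C := by
    intro x hx
    rw [Matrix.norm_le_iff hC0]
    rintro (i | i) (j | j) <;>
      simp only [hVdef, Matrix.fromBlocks_apply₁₁, Matrix.fromBlocks_apply₁₂,
        Matrix.fromBlocks_apply₂₁, Matrix.fromBlocks_apply₂₂, Matrix.zero_apply,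
        Matrix.conjTranspose_apply, norm_zero, norm_star]
    · exact hC0
    · exact le_trans (Matrix.norm_entry_le_entrywise_sup_norm (v x)) (hC x hx)
    · exact le_trans (Matrix.norm_entry_le_entrywise_sup_norm (v x)) (hC x hx)
    · exact hC0
  have hjnorm : ‖jm‖ ≤ 1 := by
    rw [hj, Matrix.norm_le_iff zero_le_one]
    rintro (i | i) (j | j) <;>
      simp only [Matrix.fromBlocks_apply₁₁, Matrix.fromBlocks_apply₁₂,
        Matrix.fromBlocks_apply₂₁, Matrix.fromBlocks_apply₂₂, Matrix.zero_apply,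
        Matrix.neg_apply, Matrix.one_apply, norm_zero, norm_neg] <;>
      first
        | exact zero_le_one
        | (split_ifs <;> simp)
  set n2 : ℝ := (Fintype.card (Fin r ⊕ Fin r) : ℝ) with hn2def
  have hn2 : 0 ≤ n2 := Nat.cast_nonneg _
  set Ka : ℝ := ‖lam‖ + n2 * C with hKadef
  have hKa0 : 0 ≤ Ka := by positivity
  have hKA : ∀ x ∈ Icc (0:ℝ) T, ‖A x‖ ≤ Ka := by
    intro x hx
    calc ‖A x‖ = ‖lam • jm + jm * V x‖ := by
          rw [hAdef]; rw [norm_smul]; simp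
      _ ≤ ‖lam • jm‖ + ‖jm * V x‖ := norm_add_le _ _
      _ ≤ ‖lam‖ * 1 + n2 * 1 * C := by
          gcongr
          · rw [norm_smul]
            exact mul_le_mul_of_nonneg_left hjnorm (norm_nonneg _)
          · calc ‖jm * V x‖ ≤ n2 * ‖jm‖ * ‖V x‖ := matnorm_mul_le _ _
              _ ≤ n2 * 1 * C := by
                  apply mul_le_mul _ (hVnorm x hx) (norm_nonneg _) (by positivity)
                  exact mul_le_mul_of_nonneg_left hjnorm hn2
      _ = Ka := by rw [hKadef]; ring
  have hKB : ∀ x ∈ Icc (0:ℝ) T, ‖B x‖ ≤ Ka := by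
    intro x hx
    calc ‖B x‖ = ‖lam • jm + V x * jm‖ := by
          rw [hBdef]; rw [norm_smul]; simp
      _ ≤ ‖lam • jm‖ + ‖V x * jm‖ := norm_add_le _ _
      _ ≤ ‖lam‖ * 1 + n2 * C * 1 := by
          gcongr
          · rw [norm_smul]
            exact mul_le_mul_of_nonneg_left hjnorm (norm_nonneg _)
          · calc ‖V x * jm‖ ≤ n2 * ‖V x‖ * ‖jm‖ := matnorm_mul_le _ _
              _ ≤ n2 * C * 1 := by
                  apply mul_le_mul _ hjnorm (norm_nonneg _) (by positivity)
                  exact mul_le_mul_of_nonneg_left (hVnorm x hx) hn2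
      _ = Ka := by rw [hKadef]; ring
  set K : ℝ := 2 * n2 * Ka with hKdef
  have hGbound : ∀ x ∈ Ico (0:ℝ) T, ‖G' x‖ ≤ K * ‖G x‖ + 0 := by
    intro x hx
    have hx' : x ∈ Icc (0:ℝ) T := Ico_subset_Icc_self hx
    rw [add_zero, hG'def]
    calc ‖A x * G x + G x * B x‖ ≤ ‖A x * G x‖ + ‖G x * B x‖ := norm_add_le _ _
      _ ≤ n2 * ‖A x‖ * ‖G x‖ + n2 * ‖G x‖ * ‖B x‖ := by
          exact add_le_add (matnorm_mul_le _ _) (matnorm_mul_le _ _)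
      _ ≤ n2 * Ka * ‖G x‖ + n2 * ‖G x‖ * Ka := by
          gcongr
          · exact hKA x hx'
          · exact hKB x hx'
      _ = K * ‖G x‖ := by rw [hKdef]; ring
  have hGderIci : ∀ x ∈ Ico (0:ℝ) T, HasDerivWithinAt G (G' x) (Ici x) x := by
    intro x hx
    refine (hGder x (Ico_subset_Icc_self hx)).mono_of_mem_nhdsWithin ?_
    exact Filter.mem_of_superset (Icc_mem_nhdsGE_of_mem ⟨le_refl x, hx.2⟩) (Icc_subset_Icc hx.1 le_rfl)
  have hmain := norm_le_gronwallBound_of_norm_deriv_right_le (δ := 0) (K := K) (ε := 0) hGcont hGderIci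
    (by rw [hG0]; simp) hGbound
  intro x hx
  have h := hmain x hx
  rw [gronwallBound_ε0] at h
  simp only [zero_mul] at h
  have hGx : G x = 0 := norm_le_zero_iff.mp h
  have : F x = jm := by
    have := hGx
    rw [hGdef] at this
    simpa [sub_eq_zero] using this
  rw [hFdef] at this
  exact this
end

section
/- With θ and ω the top and bottom r×2r blocks of u(x, 0), we have ω′(x) J θ(x)* = −i v(x)* for all x ∈ [0,T]. -/
open Set Matrix

attribute [local instance] Matrix.normedAddCommGroup Matrix.normedSpace

theorem stmt_5 {r : ℕ} (hr : 0 < r) {T : ℝ} (hT : 0 < T)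
    (v : ℝ → Matrix (Fin r) (Fin r) ℂ) (hv : ContinuousOn v (Icc 0 T))
    (jm Jm Q : Matrix (Fin r ⊕ Fin r) (Fin r ⊕ Fin r) ℂ)
    (hj : jm = Matrix.fromBlocks (1 : Matrix (Fin r) (Fin r) ℂ) 0 0 (-1))
    (hJ : Jm = Matrix.fromBlocks (0 : Matrix (Fin r) (Fin r) ℂ) 1 1 0)
    (hQ : Q = ((Real.sqrt 2 : ℂ))⁻¹ • Matrix.fromBlocks 1 (-1) 1 1)
    (u u' : ℝ → Matrix (Fin r ⊕ Fin r) (Fin r ⊕ Fin r) ℂ)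
    (hder : ∀ x ∈ Icc (0:ℝ) T, HasDerivWithinAt u (u' x) (Icc 0 T) x)
    (hcont : ContinuousOn u' (Icc 0 T))
    (heq : ∀ x ∈ Icc (0:ℝ) T,
      (-Complex.I) • (jm * u' x) = Matrix.fromBlocks 0 (v x) (v x)ᴴ 0 * u x)
    (hinit : u 0 = Qᴴ)
    (θ ω' : ℝ → Matrix (Fin r) (Fin r ⊕ Fin r) ℂ)
    (hθ : ∀ x : ℝ, θ x = (u x).submatrix Sum.inl id)
    (hω' : ∀ x : ℝ, ω' x = (u' x).submatrix Sum.inr id) :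
    ∀ x ∈ Icc (0:ℝ) T, ω' x * Jm * (θ x)ᴴ = (-Complex.I) • (v x)ᴴ := by
  intro x hx
  set Bf : ℝ → Matrix (Fin r ⊕ Fin r) (Fin r ⊕ Fin r) ℂ :=
    fun y => Matrix.fromBlocks 0 (v y) (v y)ᴴ 0 with hBf
  have hjj : jm * jm = 1 := by
    rw [hj]
    simp [Matrix.fromBlocks_multiply, Matrix.fromBlocks_one]
  have hJJ : Jm * Jm = 1 := by
    rw [hJ]
    simp [Matrix.fromBlocks_multiply, Matrix.fromBlocks_one]
  have hjH : jmᴴ = jm := by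
    rw [hj]
    simp [Matrix.fromBlocks_conjTranspose]
  have hBH : ∀ y, (Bf y)ᴴ = Bf y := by
    intro y
    simp [hBf, Matrix.fromBlocks_conjTranspose]
  have hjmu' : ∀ y ∈ Icc (0:ℝ) T, jm * u' y = Complex.I • (Bf y * u y) := by
    intro y hy
    have h := heq y hy
    calc jm * u' y = Complex.I • ((-Complex.I) • (jm * u' y)) := by
          rw [smul_smul]
          norm_num [Complex.I_mul_I]
      _ = Complex.I • (Bf y * u y) := by rw [h]
  have hu' : ∀ y ∈ Icc (0:ℝ) T, u' y = Complex.I • (jm * Bf y * u y) := by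
    intro y hy
    calc u' y = (jm * jm) * u' y := by rw [hjj, one_mul]
      _ = jm * (jm * u' y) := by rw [mul_assoc]
      _ = jm * (Complex.I • (Bf y * u y)) := by rw [hjmu' y hy]
      _ = Complex.I • (jm * Bf y * u y) := by rw [mul_smul_comm, mul_assoc]
  -- the bilinear multiplication map
  let B : Matrix (Fin r ⊕ Fin r) (Fin r ⊕ Fin r) ℂ →L[ℝ]
      Matrix (Fin r ⊕ Fin r) (Fin r ⊕ Fin r) ℂ →L[ℝ]
      Matrix (Fin r ⊕ Fin r) (Fin r ⊕ Fin r) ℂ :=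
    LinearMap.toContinuousLinearMap
      { toFun := fun A => LinearMap.toContinuousLinearMap (LinearMap.mul ℝ _ A)
        map_add' := by
          intro A C
          ext D
          simp [add_mul]
        map_smul' := by
          intro c A
          ext D
          simp }
  have hB : ∀ A C : Matrix (Fin r ⊕ Fin r) (Fin r ⊕ Fin r) ℂ, B A C = A * C := by
    intro A C
    simp [B]
  have hg0 : ∀ y ∈ Icc (0:ℝ) T,
      HasDerivWithinAt (fun z => (u z)ᴴ * jm * u z) 0 (Icc 0 T) y := by
    intro y hy
    have hD := ContinuousLinearMap.hasDerivWithinAt_of_bilinear (B := B)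
      ((hder y hy).star)
      (ContinuousLinearMap.hasDerivWithinAt_of_bilinear (B := B)
        (hasDerivWithinAt_const y _ jm) (hder y hy))
    have hfun : (fun z => B (star (u z)) (B jm (u z)))
        = fun z => (u z)ᴴ * jm * u z := by
      funext z
      rw [hB, hB, Matrix.star_eq_conjTranspose, ← mul_assoc]
    have hval : B (star (u y)) (B jm (u' y) + B 0 (u y)) + B (star (u' y)) (B jm (u y))
        = 0 := by
      rw [hB, hB, hB, hB, hB, Matrix.star_eq_conjTranspose, Matrix.star_eq_conjTranspose,
        zero_mul, add_zero]
      rw [hjmu' y hy, hu' y hy]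
      rw [Matrix.conjTranspose_smul, Complex.star_def, Complex.conj_I]
      rw [Matrix.conjTranspose_mul, Matrix.conjTranspose_mul, hjH, hBH]
      rw [mul_smul_comm, Matrix.smul_mul]
      have hx1 : (u y)ᴴ * (Bf y * u y) = (u y)ᴴ * Bf y * (jm * (jm * u y)) := by
        rw [← mul_assoc jm, hjj, one_mul, mul_assoc]
      rw [hx1]
      have hx2 : (u y)ᴴ * (Bf y * jm) * (jm * u y) = (u y)ᴴ * Bf y * (jm * (jm * u y)) := by
        rw [← mul_assoc ((u y)ᴴ) (Bf y) jm, mul_assoc ((u y)ᴴ * Bf y)]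
      rw [hx2, ← add_smul]
      simp
    convert hD using 1
    all_goals (try rfl)
    · exact hfun.symm
    · exact hval.symm
  have hUDO : UniqueDiffOn ℝ (Icc (0:ℝ) T) := uniqueDiffOn_Icc hT
  have hconst : ∀ y ∈ Icc (0:ℝ) T, (u y)ᴴ * jm * u y = (u 0)ᴴ * jm * u 0 := by
    intro y hy
    refine (convex_Icc 0 T).is_const_of_fderivWithin_eq_zero
      (fun z hz => (hg0 z hz).differentiableWithinAt) ?_ hy ⟨le_refl 0, hT.le⟩
    intro z hz
    have h := (hg0 z hz).hasFDerivWithinAt.fderivWithin (hUDO z hz)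
    refine h.trans ?_
    refine ContinuousLinearMap.ext fun t => ?_
    simp
    rfl
  have hg00 : (u 0)ᴴ * jm * u 0 = Jm := by
    rw [hinit, Matrix.conjTranspose_conjTranspose, hQ, hj, hJ]
    rw [Matrix.conjTranspose_smul, Matrix.fromBlocks_conjTranspose]
    have hc : ((Real.sqrt 2 : ℂ))⁻¹ * star ((Real.sqrt 2 : ℂ))⁻¹ = (2:ℂ)⁻¹ := by
      rw [Complex.star_def, ← Complex.ofReal_inv, Complex.conj_ofReal, ← Complex.ofReal_mul,
        ← mul_inv, Real.mul_self_sqrt (by norm_num : (0:ℝ) ≤ 2)]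
      norm_num
    rw [Matrix.smul_mul, Matrix.smul_mul, Matrix.mul_smul, smul_smul, hc]
    simp only [Matrix.fromBlocks_multiply, Matrix.conjTranspose_one, Matrix.conjTranspose_neg,
      Matrix.conjTranspose_zero]
    norm_num
    have h2 : (2 : Matrix (Fin r) (Fin r) ℂ) = (2:ℂ) • 1 := by rw [two_smul, ← one_add_one_eq_two]
    rw [Matrix.fromBlocks_smul, smul_zero, h2, smul_smul]
    norm_num
  have key : ∀ y ∈ Icc (0:ℝ) T, (u y)ᴴ * jm * u y = Jm := by
    intro y hy
    rw [hconst y hy, hg00]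
  have huJu : ∀ y ∈ Icc (0:ℝ) T, u y * Jm * (u y)ᴴ = jm := by
    intro y hy
    have h1 : (u y)ᴴ * (jm * u y * Jm) = 1 := by
      calc (u y)ᴴ * (jm * u y * Jm) = ((u y)ᴴ * jm * u y) * Jm := by
            rw [mul_assoc ((u y)ᴴ) jm (u y), ← mul_assoc]
        _ = Jm * Jm := by rw [key y hy]
        _ = 1 := hJJ
    have h2 : (jm * u y * Jm) * (u y)ᴴ = 1 := mul_eq_one_comm.mp h1
    have h3 : jm * (u y * Jm * (u y)ᴴ) = 1 := by
      rw [← mul_assoc, ← mul_assoc]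
      exact h2
    calc u y * Jm * (u y)ᴴ = (jm * jm) * (u y * Jm * (u y)ᴴ) := by rw [hjj, one_mul]
      _ = jm * 1 := by rw [mul_assoc, h3]
      _ = jm := mul_one jm
  have hθJθ : θ x * Jm * (θ x)ᴴ = 1 := by
    have h := huJu x hx
    ext a b
    have h' := congrFun (congrFun h (Sum.inl a)) (Sum.inl b)
    simp only [Matrix.mul_apply, Matrix.conjTranspose_apply, hθ, Matrix.submatrix_apply,
      id_eq, hj, Matrix.fromBlocks_apply₁₁] at h' ⊢
    exact h'
  have hω'eq : ω' x = (-Complex.I) • ((v x)ᴴ * θ x) := by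
    have hjB : jm * Bf x = Matrix.fromBlocks 0 (v x) (-(v x)ᴴ) 0 := by
      rw [hj, hBf]
      simp [Matrix.fromBlocks_multiply]
    ext a c
    rw [hω', Matrix.submatrix_apply, hu' x hx, hjB]
    simp only [Matrix.smul_apply, Matrix.mul_apply, Matrix.conjTranspose_apply, hθ,
      Matrix.submatrix_apply, id_eq, Fintype.sum_sum_type, Matrix.fromBlocks_apply₂₁,
      Matrix.fromBlocks_apply₂₂, Matrix.neg_apply, Matrix.zero_apply, zero_mul,
      Finset.sum_const_zero, add_zero, neg_mul, Finset.sum_neg_distrib]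
    simp [smul_neg, neg_smul]
  rw [hω'eq, Matrix.smul_mul, Matrix.smul_mul, Matrix.mul_assoc (v x)ᴴ (θ x) Jm,
    Matrix.mul_assoc (v x)ᴴ (θ x * Jm) (θ x)ᴴ, hθJθ, mul_one]
end

section
/- Let ω, ω̃ : [0,T] → ℂ^{r×2r} be continuously differentiable functions each satisfying θ(x) J ω(x)* = 0, ω′(x) J ω(x)* = 0, and ω(0) = (1/√2)[−I_r I_r], where θ is the top block of the fundamental solution at λ=0. Then ω = ω̃. -/
open Set Matrix

attribute [local instance] Matrix.normedAddCommGroup Matrix.normedSpace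

namespace Stmt6Aux

noncomputable def ctCLM (m n : Type*) [Fintype m] [Fintype n] :
    Matrix m n ℂ →L[ℝ] Matrix n m ℂ :=
  LinearMap.toContinuousLinearMap
    { toFun := fun A => Aᴴ
      map_add' := fun A B => Matrix.conjTranspose_add A B
      map_smul' := fun c A => by
        ext i j
        simp [Matrix.conjTranspose_apply] }

theorem deriv_ct {m n : Type*} [Fintype m] [Fintype n]
    {f : ℝ → Matrix m n ℂ} {f' : Matrix m n ℂ} {s : Set ℝ} {x : ℝ}
    (hf : HasDerivWithinAt f f' s x) :
    HasDerivWithinAt (fun t => (f t)ᴴ) f'ᴴ s x := by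
  have := (ctCLM m n).hasFDerivAt.comp_hasDerivWithinAt (x := x) hf
  exact this

noncomputable def mulCLM (m n p : Type*) [Fintype m] [Fintype n] [Fintype p] :
    Matrix m n ℂ →L[ℝ] Matrix n p ℂ →L[ℝ] Matrix m p ℂ :=
  LinearMap.toContinuousLinearMap
    { toFun := fun A => LinearMap.toContinuousLinearMap
        { toFun := fun B => A * B
          map_add' := fun B C => Matrix.mul_add A B C
          map_smul' := fun c B => by simp [Matrix.mul_smul] }
      map_add' := fun A B => by
        apply ContinuousLinearMap.ext; intro C
        simp [Matrix.add_mul]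
      map_smul' := fun c A => by
        apply ContinuousLinearMap.ext; intro C
        simp [Matrix.smul_mul] }

theorem deriv_matmul {m n p : Type*} [Fintype m] [Fintype n] [Fintype p]
    {f : ℝ → Matrix m n ℂ} {g : ℝ → Matrix n p ℂ}
    {f' : Matrix m n ℂ} {g' : Matrix n p ℂ} {s : Set ℝ} {x : ℝ}
    (hf : HasDerivWithinAt f f' s x) (hg : HasDerivWithinAt g g' s x) :
    HasDerivWithinAt (fun t => f t * g t) (f' * g x + f x * g') s x := by
  letI : NormedAddCommGroup (Matrix n p ℂ →L[ℝ] Matrix m p ℂ) :=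
    ContinuousLinearMap.toNormedAddCommGroup
  letI : NormedSpace ℝ (Matrix n p ℂ →L[ℝ] Matrix m p ℂ) := ContinuousLinearMap.toNormedSpace
  have hc : HasDerivWithinAt (fun t => mulCLM m n p (f t)) (mulCLM m n p f') s x :=
    (mulCLM m n p).hasFDerivAt.comp_hasDerivWithinAt x hf
  have := hc.clm_apply hg
  exact this

theorem const_of_deriv_zero {E : Type*} [NormedAddCommGroup E] [NormedSpace ℝ E]
    {T : ℝ} (hT : 0 < T) {f : ℝ → E}
    (h : ∀ x ∈ Icc (0:ℝ) T, HasDerivWithinAt f 0 (Icc 0 T) x) :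
    ∀ x ∈ Icc (0:ℝ) T, f x = f 0 := by
  apply constant_of_derivWithin_zero
  · intro x hx; exact (h x hx).differentiableWithinAt
  · intro x hx
    exact (h x (mem_Icc_of_Ico hx)).derivWithin
      (uniqueDiffOn_Icc hT x (mem_Icc_of_Ico hx))

end Stmt6Aux

theorem stmt_6 {r : ℕ} (hr : 0 < r) {T : ℝ} (hT : 0 < T)
    (v : ℝ → Matrix (Fin r) (Fin r) ℂ) (hv : ContinuousOn v (Icc 0 T))
    (jm Jm Q : Matrix (Fin r ⊕ Fin r) (Fin r ⊕ Fin r) ℂ)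
    (hj : jm = Matrix.fromBlocks (1 : Matrix (Fin r) (Fin r) ℂ) 0 0 (-1))
    (hJ : Jm = Matrix.fromBlocks (0 : Matrix (Fin r) (Fin r) ℂ) 1 1 0)
    (hQ : Q = ((Real.sqrt 2 : ℂ))⁻¹ • Matrix.fromBlocks 1 (-1) 1 1)
    (u u' : ℝ → Matrix (Fin r ⊕ Fin r) (Fin r ⊕ Fin r) ℂ)
    (hder : ∀ x ∈ Icc (0:ℝ) T, HasDerivWithinAt u (u' x) (Icc 0 T) x)
    (hcont : ContinuousOn u' (Icc 0 T))
    (heq : ∀ x ∈ Icc (0:ℝ) T,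
      (-Complex.I) • (jm * u' x) = Matrix.fromBlocks 0 (v x) (v x)ᴴ 0 * u x)
    (hinit : u 0 = Qᴴ)
    (hinv : ∀ x ∈ Icc (0:ℝ) T, IsUnit (u x))
    (θ : ℝ → Matrix (Fin r) (Fin r ⊕ Fin r) ℂ)
    (hθ : ∀ x : ℝ, θ x = (u x).submatrix Sum.inl id)
    (ω ω' ωt ωt' : ℝ → Matrix (Fin r) (Fin r ⊕ Fin r) ℂ)
    (hωder : ∀ x ∈ Icc (0:ℝ) T, HasDerivWithinAt ω (ω' x) (Icc 0 T) x)
    (hωcont : ContinuousOn ω' (Icc 0 T))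
    (hωtder : ∀ x ∈ Icc (0:ℝ) T, HasDerivWithinAt ωt (ωt' x) (Icc 0 T) x)
    (hωtcont : ContinuousOn ωt' (Icc 0 T))
    (h1 : ∀ x ∈ Icc (0:ℝ) T, θ x * Jm * (ω x)ᴴ = 0)
    (h2 : ∀ x ∈ Icc (0:ℝ) T, ω' x * Jm * (ω x)ᴴ = 0)
    (h3 : ω 0 = ((Real.sqrt 2 : ℂ))⁻¹ • Matrix.fromCols (-1) 1)
    (h1t : ∀ x ∈ Icc (0:ℝ) T, θ x * Jm * (ωt x)ᴴ = 0)
    (h2t : ∀ x ∈ Icc (0:ℝ) T, ωt' x * Jm * (ωt x)ᴴ = 0)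
    (h3t : ωt 0 = ((Real.sqrt 2 : ℂ))⁻¹ • Matrix.fromCols (-1) 1) :
    ∀ x ∈ Icc (0:ℝ) T, ω x = ωt x := by
  have h0S : (0:ℝ) ∈ Icc (0:ℝ) T := ⟨le_refl 0, le_of_lt hT⟩
  set c : ℂ := ((Real.sqrt 2 : ℂ))⁻¹ with hc
  have hsq : ((Real.sqrt 2 : ℝ) : ℂ) * ((Real.sqrt 2 : ℝ) : ℂ) = 2 := by
    rw [← Complex.ofReal_mul, Real.mul_self_sqrt (by norm_num)]
    norm_num
  have hcc : c * c * 2 = 1 := by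
    rw [hc, ← mul_inv, hsq]
    norm_num
  have hstarc : star c = c := by
    simp [hc, Complex.star_def, map_inv₀, Complex.conj_ofReal]
  have honehalf : (c * c) • ((1 : Matrix (Fin r) (Fin r) ℂ) + 1) = 1 := by
    rw [← two_smul ℂ (1 : Matrix (Fin r) (Fin r) ℂ), smul_smul, hcc, one_smul]
  have hJH : Jmᴴ = Jm := by
    rw [hJ]; simp [Matrix.fromBlocks_conjTranspose]
  have hjH : jmᴴ = jm := by
    rw [hj]; simp [Matrix.fromBlocks_conjTranspose]
  have hJJ : Jm * Jm = 1 := by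
    rw [hJ, Matrix.fromBlocks_multiply]
    simp [Matrix.fromBlocks_one]
  have hjj : jm * jm = 1 := by
    rw [hj, Matrix.fromBlocks_multiply]
    simp [Matrix.fromBlocks_one]
  -- the value of ρ * Jm * ρᴴ at 0
  have hval : ∀ ρ0 : Matrix (Fin r) (Fin r ⊕ Fin r) ℂ,
      ρ0 = c • Matrix.fromCols (-1) 1 → ρ0 * Jm * ρ0ᴴ = -1 := by
    intro ρ0 hρ0
    have hMM : Matrix.fromCols (-1 : Matrix (Fin r) (Fin r) ℂ)
          (1 : Matrix (Fin r) (Fin r) ℂ) * Jm *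
        (Matrix.fromCols (-1 : Matrix (Fin r) (Fin r) ℂ)
          (1 : Matrix (Fin r) (Fin r) ℂ))ᴴ = -((1 : Matrix (Fin r) (Fin r) ℂ) + 1) := by
      rw [hJ, Matrix.conjTranspose_fromCols_eq_fromRows_conjTranspose,
        Matrix.fromCols_mul_fromBlocks]
      simp [Matrix.fromCols_mul_fromRows]
    rw [hρ0, Matrix.conjTranspose_smul]
    simp only [Matrix.smul_mul, Matrix.mul_smul, smul_smul]
    rw [hMM, hstarc, smul_neg, honehalf]
  -- invariant for ω-type functions
  have key : ∀ ρ ρ' : ℝ → Matrix (Fin r) (Fin r ⊕ Fin r) ℂ,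
      (∀ x ∈ Icc (0:ℝ) T, HasDerivWithinAt ρ (ρ' x) (Icc 0 T) x) →
      (∀ x ∈ Icc (0:ℝ) T, ρ' x * Jm * (ρ x)ᴴ = 0) →
      ρ 0 = c • Matrix.fromCols (-1) 1 →
      ∀ x ∈ Icc (0:ℝ) T, ρ x * Jm * (ρ x)ᴴ = -1 := by
    intro ρ ρ' hρd hρ2 hρ0
    have hderiv : ∀ x ∈ Icc (0:ℝ) T,
        HasDerivWithinAt (fun t => ρ t * Jm * (ρ t)ᴴ) 0 (Icc 0 T) x := by
      intro x hx
      have ha : HasDerivWithinAt (fun t => ρ t * Jm) (ρ' x * Jm) (Icc 0 T) x := by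
        simpa using Stmt6Aux.deriv_matmul (hρd x hx) (hasDerivWithinAt_const x _ Jm)
      have hb := Stmt6Aux.deriv_matmul ha (Stmt6Aux.deriv_ct (hρd x hx))
      have hz2 : ρ x * Jm * (ρ' x)ᴴ = 0 := by
        have := congrArg Matrix.conjTranspose (hρ2 x hx)
        simpa [Matrix.conjTranspose_mul, hJH, Matrix.mul_assoc] using this
      have hsum : ρ' x * Jm * (ρ x)ᴴ + ρ x * Jm * (ρ' x)ᴴ = 0 := by
        rw [hρ2 x hx, hz2, add_zero]
      simpa [hsum] using hb
    have hconst := Stmt6Aux.const_of_deriv_zero hT hderiv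
    intro x hx
    rw [hconst x hx, hval (ρ 0) hρ0]
  have hωJω := key ω ω' hωder h2 h3
  have hωtJωt := key ωt ωt' hωtder h2t h3t
  -- Q * jm * Qᴴ = Jm
  have hQjmQ : Q * jm * Qᴴ = Jm := by
    have hBH : (Matrix.fromBlocks (1 : Matrix (Fin r) (Fin r) ℂ) (-1) 1 1)ᴴ
        = Matrix.fromBlocks (1 : Matrix (Fin r) (Fin r) ℂ) (1 : Matrix (Fin r) (Fin r) ℂ)
          (-1 : Matrix (Fin r) (Fin r) ℂ) (1 : Matrix (Fin r) (Fin r) ℂ) := by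
      simp [Matrix.fromBlocks_conjTranspose]
    rw [hQ, Matrix.conjTranspose_smul, hBH]
    simp only [Matrix.smul_mul, Matrix.mul_smul, smul_smul]
    rw [hstarc, hj, Matrix.fromBlocks_multiply, Matrix.fromBlocks_multiply]
    simp only [Matrix.mul_one, Matrix.one_mul, Matrix.mul_zero, Matrix.zero_mul,
      add_zero, zero_add, Matrix.neg_mul, Matrix.mul_neg, neg_neg, Matrix.one_mul]
    rw [Matrix.fromBlocks_smul]
    rw [hJ]
    have honehalf' : (c * c) • (1 : Matrix (Fin r) (Fin r) ℂ) + (c * c) • 1 = 1 := by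
      rw [← smul_add]; exact honehalf
    congr 1 <;> simp [smul_add, honehalf']
  -- H x
  have hHH : ∀ x, (Matrix.fromBlocks 0 (v x) (v x)ᴴ 0)ᴴ
      = Matrix.fromBlocks (0 : Matrix (Fin r) (Fin r) ℂ) (v x) (v x)ᴴ 0 := by
    intro x
    simp [Matrix.fromBlocks_conjTranspose]
  have hjmu' : ∀ x ∈ Icc (0:ℝ) T,
      jm * u' x = Complex.I • (Matrix.fromBlocks 0 (v x) (v x)ᴴ 0 * u x) := by
    intro x hx
    have h := heq x hx
    have h2' : Complex.I • ((-Complex.I) • (jm * u' x))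
        = Complex.I • (Matrix.fromBlocks 0 (v x) (v x)ᴴ 0 * u x) := by rw [h]
    rw [smul_smul] at h2'
    simpa [mul_neg, Complex.I_mul_I, neg_neg] using h2'
  have hG : ∀ x ∈ Icc (0:ℝ) T,
      HasDerivWithinAt (fun t => (u t)ᴴ * jm * u t) 0 (Icc 0 T) x := by
    intro x hx
    have ha : HasDerivWithinAt (fun t => (u t)ᴴ * jm) ((u' x)ᴴ * jm) (Icc 0 T) x := by
      simpa using Stmt6Aux.deriv_matmul (Stmt6Aux.deriv_ct (hder x hx))
        (hasDerivWithinAt_const x _ jm)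
    have hb := Stmt6Aux.deriv_matmul ha (hder x hx)
    have e1 : (u x)ᴴ * jm * u' x
        = Complex.I • ((u x)ᴴ * (Matrix.fromBlocks 0 (v x) (v x)ᴴ 0 * u x)) := by
      rw [Matrix.mul_assoc, hjmu' x hx, Matrix.mul_smul]
    have e2 : (u' x)ᴴ * jm * u x
        = (-Complex.I) • ((u x)ᴴ * (Matrix.fromBlocks 0 (v x) (v x)ᴴ 0 * u x)) := by
      have e3 : (u' x)ᴴ * jm = (jm * u' x)ᴴ := by
        rw [Matrix.conjTranspose_mul, hjH]
      rw [e3, hjmu' x hx, Matrix.conjTranspose_smul, Matrix.conjTranspose_mul, hHH]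
      rw [Matrix.smul_mul, Matrix.mul_assoc]
      simp [Complex.star_def, Complex.conj_I, Matrix.mul_assoc]
    have hsum : (u' x)ᴴ * jm * u x + (u x)ᴴ * jm * u' x = 0 := by
      rw [e1, e2, ← add_smul]
      simp
    simpa [hsum] using hb
  have hiu := Stmt6Aux.const_of_deriv_zero hT hG
  have hUJU : ∀ x ∈ Icc (0:ℝ) T, (u x)ᴴ * jm * u x = Jm := by
    intro x hx
    rw [hiu x hx, hinit, Matrix.conjTranspose_conjTranspose]
    exact hQjmQ
  -- cancellation by u x on the right
  have hcancel : ∀ (A B : Matrix (Fin r ⊕ Fin r) (Fin r ⊕ Fin r) ℂ)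
      (x : ℝ), x ∈ Icc (0:ℝ) T → A * u x = B * u x → A = B := by
    intro A B x hx hAB
    have hdet := (Matrix.isUnit_iff_isUnit_det _).mp (hinv x hx)
    have h1' := Matrix.mul_nonsing_inv (u x) hdet
    calc A = A * (u x * (u x)⁻¹) := by rw [h1', Matrix.mul_one]
      _ = A * u x * (u x)⁻¹ := by rw [Matrix.mul_assoc]
      _ = B * u x * (u x)⁻¹ := by rw [hAB]
      _ = B * (u x * (u x)⁻¹) := by rw [Matrix.mul_assoc]
      _ = B := by rw [h1', Matrix.mul_one]
  have huJu : ∀ x ∈ Icc (0:ℝ) T, u x * Jm * (u x)ᴴ = jm := by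
    intro x hx
    have hA : u x * Jm * (u x)ᴴ * jm * u x = u x := by
      calc u x * Jm * (u x)ᴴ * jm * u x
          = u x * Jm * ((u x)ᴴ * jm * u x) := by simp only [Matrix.mul_assoc]
        _ = u x * (Jm * Jm) := by rw [hUJU x hx, Matrix.mul_assoc]
        _ = u x := by rw [hJJ, Matrix.mul_one]
    have h2' : u x * Jm * (u x)ᴴ * jm = 1 := by
      apply hcancel _ _ x hx
      rw [Matrix.one_mul]
      exact hA
    calc u x * Jm * (u x)ᴴ = u x * Jm * (u x)ᴴ * (jm * jm) := by
          rw [hjj, Matrix.mul_one]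
      _ = (u x * Jm * (u x)ᴴ * jm) * jm := (Matrix.mul_assoc _ jm jm).symm
      _ = jm := by rw [h2', Matrix.one_mul]
  -- θ = P * u with P = [1 0]
  set P : Matrix (Fin r) (Fin r ⊕ Fin r) ℂ :=
    Matrix.fromCols 1 0 with hPdef
  have hθP : ∀ x, θ x = P * u x := by
    intro x
    ext i q
    rw [hθ]
    simp [hPdef, Matrix.mul_apply, Matrix.fromCols, Fintype.sum_sum_type,
      Matrix.one_apply, ite_mul]
  have hPjmP : P * jm * Pᴴ = 1 := by
    rw [hPdef, hj, Matrix.conjTranspose_fromCols_eq_fromRows_conjTranspose,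
      Matrix.fromCols_mul_fromBlocks]
    simp [Matrix.fromCols_mul_fromRows]
  have hθJθ : ∀ x ∈ Icc (0:ℝ) T, θ x * Jm * (θ x)ᴴ = 1 := by
    intro x hx
    rw [hθP x, Matrix.conjTranspose_mul]
    calc P * u x * Jm * ((u x)ᴴ * Pᴴ)
        = P * (u x * Jm * (u x)ᴴ) * Pᴴ := by simp only [Matrix.mul_assoc]
      _ = P * jm * Pᴴ := by rw [huJu x hx]
      _ = 1 := hPjmP
  -- transposed orthogonality relations
  have hωJθ : ∀ x ∈ Icc (0:ℝ) T, ω x * Jm * (θ x)ᴴ = 0 := by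
    intro x hx
    have := congrArg Matrix.conjTranspose (h1 x hx)
    simpa [Matrix.conjTranspose_mul, hJH, Matrix.mul_assoc] using this
  have hωtJθ : ∀ x ∈ Icc (0:ℝ) T, ωt x * Jm * (θ x)ᴴ = 0 := by
    intro x hx
    have := congrArg Matrix.conjTranspose (h1t x hx)
    simpa [Matrix.conjTranspose_mul, hJH, Matrix.mul_assoc] using this
  -- the gauge function g
  set g : ℝ → Matrix (Fin r) (Fin r) ℂ :=
    fun x => -(ωt x * Jm * (ω x)ᴴ) with hgdef
  have hrep : ∀ x ∈ Icc (0:ℝ) T, ωt x = g x * ω x := by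
    intro x hx
    set W := Matrix.fromRows (θ x) (ω x) with hWdef
    have hWH : Wᴴ = Matrix.fromCols (θ x)ᴴ (ω x)ᴴ := by
      rw [hWdef, Matrix.conjTranspose_fromRows_eq_fromCols_conjTranspose]
    have hWJW : W * Jm * Wᴴ = jm := by
      rw [hWdef, hWH, Matrix.fromRows_mul, Matrix.fromRows_mul_fromCols, hj]
      rw [hθJθ x hx, h1 x hx, hωJθ x hx, hωJω x hx]
    have hleft : W * (Jm * Wᴴ * jm) = 1 := by
      calc W * (Jm * Wᴴ * jm) = (W * Jm * Wᴴ) * jm := by simp only [Matrix.mul_assoc]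
        _ = 1 := by rw [hWJW, hjj]
    have hcomm : (Jm * Wᴴ * jm) * W = 1 := mul_eq_one_comm.mp hleft
    have hri : (Jm * Wᴴ) * (jm * W) = 1 := by
      calc (Jm * Wᴴ) * (jm * W) = (Jm * Wᴴ * jm) * W := by simp only [Matrix.mul_assoc]
        _ = 1 := hcomm
    set N := ωt x - g x * ω x with hNdef
    have hA : N * Jm * (θ x)ᴴ = 0 := by
      rw [hNdef, Matrix.sub_mul, Matrix.sub_mul, hωtJθ x hx]
      have e : g x * ω x * Jm * (θ x)ᴴ = g x * (ω x * Jm * (θ x)ᴴ) := by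
        simp only [Matrix.mul_assoc]
      rw [e, hωJθ x hx, Matrix.mul_zero, sub_zero]
    have hB : N * Jm * (ω x)ᴴ = 0 := by
      rw [hNdef, Matrix.sub_mul, Matrix.sub_mul]
      have e : g x * ω x * Jm * (ω x)ᴴ = g x * (ω x * Jm * (ω x)ᴴ) := by
        simp only [Matrix.mul_assoc]
      rw [e, hωJω x hx, hgdef]
      simp
    have hNzero : N * (Jm * Wᴴ) = 0 := by
      have e : N * (Jm * Wᴴ) = N * Jm * Wᴴ := (Matrix.mul_assoc _ _ _).symm
      rw [e, hWH, Matrix.mul_fromCols, hA, hB, Matrix.fromCols_zero]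
    have hNz : N = 0 := by
      calc N = N * ((Jm * Wᴴ) * (jm * W)) := by rw [hri, Matrix.mul_one]
        _ = (N * (Jm * Wᴴ)) * (jm * W) := (Matrix.mul_assoc _ _ _).symm
        _ = 0 := by rw [hNzero, Matrix.zero_mul]
    have h0' : ωt x - g x * ω x = 0 := by rw [← hNdef]; exact hNz
    exact sub_eq_zero.mp h0'
  -- g is unitary-valued
  have hgg : ∀ x ∈ Icc (0:ℝ) T, g x * (g x)ᴴ = 1 := by
    intro x hx
    have h5 : g x * (ω x * Jm * (ω x)ᴴ) * (g x)ᴴ = -1 := by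
      have e : g x * (ω x * Jm * (ω x)ᴴ) * (g x)ᴴ = (g x * ω x) * Jm * (g x * ω x)ᴴ := by
        rw [Matrix.conjTranspose_mul]
        simp only [Matrix.mul_assoc]
      rw [e, ← hrep x hx]
      exact hωtJωt x hx
    rw [hωJω x hx] at h5
    have h6 : -(g x * (g x)ᴴ) = -1 := by
      rw [← h5]
      simp
    exact neg_injective h6
  -- derivative of g is zero
  have hgd : ∀ x ∈ Icc (0:ℝ) T, HasDerivWithinAt g 0 (Icc 0 T) x := by
    intro x hx
    have hc1 : (g x)ᴴ * g x = 1 := mul_eq_one_comm.mp (hgg x hx)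
    have e : ωt' x * Jm * (ω x)ᴴ * (g x)ᴴ = 0 := by
      have h7 := h2t x hx
      rw [hrep x hx, Matrix.conjTranspose_mul] at h7
      calc ωt' x * Jm * (ω x)ᴴ * (g x)ᴴ
          = ωt' x * Jm * ((ω x)ᴴ * (g x)ᴴ) := by rw [Matrix.mul_assoc]
        _ = 0 := h7
    have hz1 : ωt' x * Jm * (ω x)ᴴ = 0 := by
      calc ωt' x * Jm * (ω x)ᴴ
          = ωt' x * Jm * (ω x)ᴴ * ((g x)ᴴ * g x) := by rw [hc1, Matrix.mul_one]
        _ = (ωt' x * Jm * (ω x)ᴴ * (g x)ᴴ) * g x := (Matrix.mul_assoc _ _ _).symm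
        _ = 0 := by rw [e, Matrix.zero_mul]
    have e2 : ω' x * Jm * (ωt x)ᴴ = 0 := by
      rw [hrep x hx, Matrix.conjTranspose_mul, ← Matrix.mul_assoc, h2 x hx,
        Matrix.zero_mul]
    have hz2 : ωt x * Jm * (ω' x)ᴴ = 0 := by
      have := congrArg Matrix.conjTranspose e2
      simpa [Matrix.conjTranspose_mul, hJH, Matrix.mul_assoc] using this
    have ha : HasDerivWithinAt (fun t => ωt t * Jm) (ωt' x * Jm) (Icc 0 T) x := by
      simpa using Stmt6Aux.deriv_matmul (hωtder x hx) (hasDerivWithinAt_const x _ Jm)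
    have hb := (Stmt6Aux.deriv_matmul ha (Stmt6Aux.deriv_ct (hωder x hx))).neg
    rw [hgdef]
    simp [hz1, hz2] at hb
    exact hb
  have hgc := Stmt6Aux.const_of_deriv_zero hT hgd
  have hg0 : g 0 = 1 := by
    have h00 : ωt 0 = ω 0 := by rw [h3t, h3]
    rw [hgdef]
    show -(ωt 0 * Jm * (ω 0)ᴴ) = 1
    rw [h00, hωJω 0 h0S, neg_neg]
  intro x hx
  have hfin := hrep x hx
  rw [hgc x hx, hg0, Matrix.one_mul] at hfin
  exact hfin.symm
end

section
/- Let F : [0,T] → ℂ^{r×p} and G : [0,T] → ℂ^{p×r} be continuously differentiable with F(x)G(x) = I_r for all x. Let u₁(x,λ) solve u₁′ = λ G F u₁ with u₁(0,λ) = I_p, and let ũ₁ solve ũ₁′ = −G F′ ũ₁, ũ₁(0) = I_p. Then for all x: d/dx [ ũ₁(x)⁻¹ (I_p − G(x)F(x)) u₁(x,λ) ] = − ũ₁(x)⁻¹ (G(x)F′(x)G(x) + G′(x)) F(x) u₁(x,λ). -/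
open Set Matrix intervalIntegral

attribute [local instance] Matrix.normedAddCommGroup Matrix.normedSpace

private lemma hasDerivWithinAt_matrix {n m : ℕ} {f : ℝ → Matrix (Fin n) (Fin m) ℂ}
    {f' : Matrix (Fin n) (Fin m) ℂ} {s : Set ℝ} {x : ℝ} :
    HasDerivWithinAt f f' s x ↔
      ∀ i j, HasDerivWithinAt (fun y => f y i j) (f' i j) s x := by
  refine (hasDerivWithinAt_pi (φ := f)).trans ?_
  exact forall_congr' fun i => hasDerivWithinAt_pi

private lemma HasDerivWithinAt.matrix_mul {n m k : ℕ} {f : ℝ → Matrix (Fin n) (Fin m) ℂ}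
    {g : ℝ → Matrix (Fin m) (Fin k) ℂ} {f' : Matrix (Fin n) (Fin m) ℂ}
    {g' : Matrix (Fin m) (Fin k) ℂ} {s : Set ℝ} {x : ℝ}
    (hf : HasDerivWithinAt f f' s x) (hg : HasDerivWithinAt g g' s x) :
    HasDerivWithinAt (fun y => f y * g y) (f' * g x + f x * g') s x := by
  rw [hasDerivWithinAt_matrix] at hf hg ⊢
  intro i j
  simp only [Matrix.add_apply, Matrix.mul_apply]
  simpa [Finset.sum_add_distrib] using
    HasDerivWithinAt.fun_sum fun l (_ : l ∈ Finset.univ) => (hf i l).mul (hg l j)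

private lemma diffWithin_det {n : ℕ} {f : ℝ → Matrix (Fin n) (Fin n) ℂ} {s : Set ℝ} {x : ℝ}
    (hf : ∀ i j, DifferentiableWithinAt ℝ (fun y => f y i j) s x) :
    DifferentiableWithinAt ℝ (fun y => (f y).det) s x := by
  simp only [Matrix.det_apply']
  exact DifferentiableWithinAt.fun_sum fun σ _ =>
    (DifferentiableWithinAt.fun_finsetProd fun i _ => hf (σ i) i).const_mul _

theorem stmt_14 {r p : ℕ} (hr : 0 < r) (hp : 0 < p) {T : ℝ} (hT : 0 < T) (lam : ℂ)
    (F F' : ℝ → Matrix (Fin r) (Fin p) ℂ) (G G' : ℝ → Matrix (Fin p) (Fin r) ℂ)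
    (hFder : ∀ x ∈ Icc (0:ℝ) T, HasDerivWithinAt F (F' x) (Icc 0 T) x)
    (hGder : ∀ x ∈ Icc (0:ℝ) T, HasDerivWithinAt G (G' x) (Icc 0 T) x)
    (hFcont : ContinuousOn F' (Icc 0 T)) (hGcont : ContinuousOn G' (Icc 0 T))
    (hFG : ∀ x ∈ Icc (0:ℝ) T, F x * G x = 1)
    (u₁ tu : ℝ → Matrix (Fin p) (Fin p) ℂ)
    (hu₁ : ∀ x ∈ Icc (0:ℝ) T,
      HasDerivWithinAt u₁ (lam • (G x * F x * u₁ x)) (Icc 0 T) x)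
    (hu₁0 : u₁ 0 = 1)
    (htu : ∀ x ∈ Icc (0:ℝ) T,
      HasDerivWithinAt tu (-(G x * F' x * tu x)) (Icc 0 T) x)
    (htu0 : tu 0 = 1)
    (hu₁inv : ∀ x ∈ Icc (0:ℝ) T, IsUnit (u₁ x))
    (htuinv : ∀ x ∈ Icc (0:ℝ) T, IsUnit (tu x)) :
    ∀ x ∈ Icc (0:ℝ) T,
      HasDerivWithinAt (fun y => (tu y)⁻¹ * (1 - G y * F y) * u₁ y)
        (-((tu x)⁻¹ * (G x * F' x * G x + G' x) * (F x * u₁ x))) (Icc 0 T) x := by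
  intro x hx
  set s : Set ℝ := Icc (0:ℝ) T with hs
  set w : ℝ → Matrix (Fin p) (Fin p) ℂ := fun y => (tu y)⁻¹ with hw
  -- entrywise differentiability of tu
  have htuE : ∀ i j, DifferentiableWithinAt ℝ (fun y => tu y i j) s x :=
    fun i j => (hasDerivWithinAt_matrix.mp (htu x hx) i j).differentiableWithinAt
  -- det ≠ 0 at x
  have hdet : IsUnit (tu x).det := (Matrix.isUnit_iff_isUnit_det _).mp (htuinv x hx)
  have hdetne : (tu x).det ≠ 0 := IsUnit.ne_zero hdet
  -- differentiability of w
  have hwd : DifferentiableWithinAt ℝ w s x := by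
    have hdetd : DifferentiableWithinAt ℝ (fun y => (tu y).det) s x := diffWithin_det htuE
    have hadj : DifferentiableWithinAt ℝ (fun y => (tu y).adjugate) s x := by
      refine (differentiableWithinAt_pi (Φ := fun y => (tu y).adjugate)).mpr ?_
      intro i
      rw [differentiableWithinAt_pi]
      intro j
      simp only [Matrix.adjugate_apply]
      refine diffWithin_det fun i' j' => ?_
      rcases eq_or_ne i' j with rfl | hne
      · simpa [Matrix.updateRow_apply] using differentiableWithinAt_const _
      · simpa [Matrix.updateRow_apply, hne] using htuE i' j'
    have : DifferentiableWithinAt ℝ (fun y => ((tu y).det)⁻¹ • (tu y).adjugate) s x :=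
      (hdetd.inv hdetne).smul hadj
    refine this.congr (fun y _ => ?_) ?_
    · show (tu y)⁻¹ = _; rw [Matrix.inv_def, Ring.inverse_eq_inv']
    · show (tu x)⁻¹ = _; rw [Matrix.inv_def, Ring.inverse_eq_inv']
  obtain ⟨w', hw'⟩ : ∃ w', HasDerivWithinAt w w' s x := ⟨_, hwd.hasDerivWithinAt⟩
  -- w x * tu x = 1 and tu x * w x = 1
  have hwl : ∀ y ∈ s, w y * tu y = 1 := fun y hy =>
    Matrix.nonsing_inv_mul _ ((Matrix.isUnit_iff_isUnit_det _).mp (htuinv y hy))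
  have hwr : tu x * w x = 1 :=
    Matrix.mul_nonsing_inv _ ((Matrix.isUnit_iff_isUnit_det _).mp (htuinv x hx))
  -- derivative of w * tu is zero (it's constant 1 on s)
  have hprod : HasDerivWithinAt (fun y => w y * tu y) (w' * tu x + w x * -(G x * F' x * tu x))
      s x := hw'.matrix_mul (htu x hx)
  have hone : HasDerivWithinAt (fun y => w y * tu y) 0 s x :=
    (hasDerivWithinAt_const x s (1 : Matrix (Fin p) (Fin p) ℂ)).congr hwl (hwl x hx)
  have huniq : UniqueDiffWithinAt ℝ s x := (uniqueDiffOn_Icc hT) x hx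
  have hzero : w' * tu x + w x * -(G x * F' x * tu x) = 0 := by
    have h1 := hprod.hasFDerivWithinAt
    have h2 := hone.hasFDerivWithinAt
    have := huniq.eq h1 h2
    have := DFunLike.congr_fun this (1 : ℝ)
    simpa using this
  -- solve for w'
  have hw'eq : w' = (tu x)⁻¹ * (G x * F' x) := by
    have h1 : w' * tu x = w x * (G x * F' x * tu x) := by
      have := hzero
      rw [add_eq_zero_iff_eq_neg] at this
      rw [this]; rw [Matrix.mul_neg, neg_neg]
    have h2 : w' * tu x * w x = w x * (G x * F' x * tu x) * w x := by rw [h1]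
    calc w' = w' * 1 := by rw [mul_one]
      _ = w' * (tu x * w x) := by rw [hwr]
      _ = w' * tu x * w x := by rw [mul_assoc]
      _ = w x * (G x * F' x * tu x) * w x := h2
      _ = w x * (G x * F' x) * (tu x * w x) := by noncomm_ring
      _ = (tu x)⁻¹ * (G x * F' x) := by rw [hwr, mul_one]
  -- derivative of (1 - G F)
  have hGF : HasDerivWithinAt (fun y => (1 : Matrix (Fin p) (Fin p) ℂ) - G y * F y)
      (-(G' x * F x + G x * F' x)) s x := by
    have := ((hGder x hx).matrix_mul (hFder x hx)).const_sub (1 : Matrix (Fin p) (Fin p) ℂ)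
    simp only [neg_add_rev] at this ⊢; exact this
  -- assemble
  have hmain := ((hw'.matrix_mul hGF).matrix_mul (hu₁ x hx))
  have key : (w' * (1 - G x * F x) + w x * -(G' x * F x + G x * F' x)) * u₁ x +
      w x * (1 - G x * F x) * (lam • (G x * F x * u₁ x)) =
      -((tu x)⁻¹ * (G x * F' x * G x + G' x) * (F x * u₁ x)) := by
    have hGFG : ((1 : Matrix (Fin p) (Fin p) ℂ) - G x * F x) * G x = 0 := by
      rw [Matrix.sub_mul, Matrix.one_mul, Matrix.mul_assoc, hFG x hx, Matrix.mul_one, sub_self]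
    have hzero2 : w x * (1 - G x * F x) * (lam • (G x * F x * u₁ x)) = 0 := by
      rw [Matrix.mul_smul, Matrix.mul_assoc]
      have h0 : ((1 : Matrix (Fin p) (Fin p) ℂ) - G x * F x) * (G x * F x * u₁ x) = 0 := by
        rw [← Matrix.mul_assoc, ← Matrix.mul_assoc, hGFG, Matrix.zero_mul, Matrix.zero_mul]
      rw [h0, Matrix.mul_zero, smul_zero]
    rw [hzero2, add_zero, hw'eq]
    simp only [Matrix.mul_sub, Matrix.sub_mul, Matrix.mul_one, Matrix.one_mul, Matrix.mul_neg,
      Matrix.neg_mul, Matrix.mul_add, Matrix.add_mul, Matrix.mul_assoc, neg_add_rev,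
      sub_eq_add_neg]
    abel
  rw [← key]
  exact hmain
end

section
/- With the admissible triple data as above, the matrix function Σ(t) satisfies the Lyapunov-type identity A Σ(τ) − Σ(τ) A* = i Π(τ) j Π(τ)* for all τ ≥ 0, where j = diag(I_r, −I_r). -/
open Set Matrix intervalIntegral

section auxlinfty
attribute [local instance] Matrix.linftyOpNormedRing Matrix.linftyOpNormedAlgebra

lemma aux_exp_deriv_entry {n : ℕ} (A : Matrix (Fin n) (Fin n) ℂ) (c : ℂ) (t : ℝ) (i k : Fin n) :
    HasDerivAt (fun s : ℝ => NormedSpace.exp (((c * s)) • A) i k)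
      (((c • A) * NormedSpace.exp ((c * t) • A)) i k) t := by
  have h2 : HasDerivAt (fun s : ℝ => NormedSpace.exp (((c * s)) • A))
      ((c • A) * NormedSpace.exp ((c * t) • A)) t := by
    have h1 : HasDerivAt (fun u : ℂ => NormedSpace.exp (u • (c • A)))
        ((c • A) * NormedSpace.exp ((t:ℂ) • (c • A))) (t : ℂ) :=
      hasDerivAt_exp_smul_const' (c • A) (t : ℂ)
    have h2 := (h1.hasFDerivAt.restrictScalars ℝ).comp_hasDerivAt t Complex.ofRealCLM.hasDerivAt
    have e : ∀ s : ℝ, (s : ℂ) • (c • A) = (c * s) • A := by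
      intro s; rw [smul_smul, mul_comm]
    have h3 : HasDerivAt (fun s : ℝ => NormedSpace.exp ((s:ℂ) • (c • A)))
        ((c • A) * NormedSpace.exp ((t:ℂ) • (c • A))) t := by
      exact h2.congr_deriv (by
        show ((1:ℝ):ℂ) • ((c • A) * NormedSpace.exp ((t:ℂ) • (c • A))) = _
        rw [Complex.ofReal_one, one_smul])
    simp only [e] at h3
    exact h3
  let L : Matrix (Fin n) (Fin n) ℂ →ₗ[ℝ] ℂ :=
    { toFun := fun M => M i k, map_add' := fun _ _ => rfl, map_smul' := fun _ _ => rfl }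
  exact (LinearMap.toContinuousLinearMap L).hasFDerivAt.comp_hasDerivAt t h2

end auxlinfty

attribute [local instance] Matrix.normedAddCommGroup Matrix.normedSpace

lemma exp_deriv_main {n : ℕ} (A : Matrix (Fin n) (Fin n) ℂ) (c : ℂ) (t : ℝ) :
    HasDerivAt (fun s : ℝ => NormedSpace.exp (((c * s)) • A))
      ((c • A) * NormedSpace.exp ((c * t) • A)) t := by
  refine hasDerivAt_pi.2 ?_; intro i; refine hasDerivAt_pi.2 ?_; intro k
  exact aux_exp_deriv_entry A c t i k

lemma hasDerivAt_matrix_mul {n m p : ℕ} {f : ℝ → Matrix (Fin n) (Fin m) ℂ}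
    {g : ℝ → Matrix (Fin m) (Fin p) ℂ} {f' : Matrix (Fin n) (Fin m) ℂ}
    {g' : Matrix (Fin m) (Fin p) ℂ} {t : ℝ}
    (hf : HasDerivAt f f' t) (hg : HasDerivAt g g' t) :
    HasDerivAt (fun s => f s * g s) (f' * g t + f t * g') t := by
  refine hasDerivAt_pi.2 ?_; intro i; refine hasDerivAt_pi.2 ?_; intro k
  have hfe : ∀ j, HasDerivAt (fun s => f s i j) (f' i j) t :=
    fun j => hasDerivAt_pi.1 (hasDerivAt_pi.1 hf i) j
  have hge : ∀ j, HasDerivAt (fun s => g s j k) (g' j k) t :=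
    fun j => hasDerivAt_pi.1 (hasDerivAt_pi.1 hg j) k
  have hsum := HasDerivAt.fun_sum (u := Finset.univ)
    (fun j _ => (hfe j).mul (hge j))
  simpa [Matrix.mul_apply, Matrix.add_apply, Finset.sum_add_distrib] using hsum

lemma hasDerivAt_conjTranspose {n m : ℕ} {f : ℝ → Matrix (Fin n) (Fin m) ℂ}
    {f' : Matrix (Fin n) (Fin m) ℂ} {t : ℝ} (hf : HasDerivAt f f' t) :
    HasDerivAt (fun s => (f s)ᴴ) f'ᴴ t := by
  refine hasDerivAt_pi.2 ?_; intro i; refine hasDerivAt_pi.2 ?_; intro k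
  have h : HasDerivAt (fun s => f s k i) (f' k i) t :=
    hasDerivAt_pi.1 (hasDerivAt_pi.1 hf k) i
  have := (Complex.conjCLE.toContinuousLinearMap.hasFDerivAt).comp_hasDerivAt t h
  simpa [Matrix.conjTranspose_apply, Function.comp_def] using this

lemma continuous_matrix_mul' {n m p : ℕ} {f : ℝ → Matrix (Fin n) (Fin m) ℂ}
    {g : ℝ → Matrix (Fin m) (Fin p) ℂ} (hf : Continuous f) (hg : Continuous g) :
    Continuous fun s => f s * g s := by
  apply continuous_pi; intro i; apply continuous_pi; intro k
  simp only [Matrix.mul_apply]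
  exact continuous_finset_sum _ fun j _ =>
    (((continuous_apply j).comp ((continuous_apply i).comp hf)).mul
      (((continuous_apply k).comp ((continuous_apply j).comp hg))))

lemma continuous_matrix_conjTranspose' {n m : ℕ} {f : ℝ → Matrix (Fin n) (Fin m) ℂ}
    (hf : Continuous f) : Continuous fun s => (f s)ᴴ := by
  apply continuous_pi; intro i; apply continuous_pi; intro k
  exact Complex.conjCLE.continuous.comp ((continuous_apply i).comp ((continuous_apply k).comp hf))

theorem stmt_18 {n r : ℕ} (hn : 0 < n) (hr : 0 < r)
    (B : Matrix (Fin n) (Fin n) ℂ) (Φ₁ Φ₂ : Matrix (Fin n) (Fin r) ℂ)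
    (hadm : Bᴴ - B = Complex.I • (Φ₂ * Φ₂ᴴ))
    (A : Matrix (Fin n) (Fin n) ℂ) (hA : A = B - Φ₁ * Φ₂ᴴ)
    (Φ : Matrix (Fin n) (Fin r) ℂ) (hΦ : Φ = Φ₁ + Complex.I • Φ₂)
    (Pim : ℝ → Matrix (Fin n) (Fin r ⊕ Fin r) ℂ)
    (hPim : ∀ t : ℝ, Pim t = Matrix.fromCols
      (NormedSpace.exp ((-(Complex.I * t)) • A) * Φ₁)
      (-(NormedSpace.exp ((Complex.I * t) • A) * Φ)))
    (Sig : ℝ → Matrix (Fin n) (Fin n) ℂ)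
    (hSig : ∀ t : ℝ, Sig t = 1 + ∫ s in (0:ℝ)..t, Pim s * (Pim s)ᴴ)
    (jm : Matrix (Fin r ⊕ Fin r) (Fin r ⊕ Fin r) ℂ)
    (hj : jm = Matrix.fromBlocks (1 : Matrix (Fin r) (Fin r) ℂ) 0 0 (-1)) :
    ∀ τ : ℝ, 0 ≤ τ →
      A * Sig τ - Sig τ * Aᴴ = Complex.I • (Pim τ * jm * (Pim τ)ᴴ) := by
  intro τ _
  set X : ℝ → Matrix (Fin n) (Fin n) ℂ :=
    fun t => NormedSpace.exp ((-Complex.I * (t:ℝ)) • A) with hXdef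
  set Y : ℝ → Matrix (Fin n) (Fin n) ℂ :=
    fun t => NormedSpace.exp ((Complex.I * (t:ℝ)) • A) with hYdef
  have hXd : ∀ t, HasDerivAt X ((-Complex.I) • A * X t) t :=
    fun t => exp_deriv_main A (-Complex.I) t
  have hYd : ∀ t, HasDerivAt Y (Complex.I • A * Y t) t :=
    fun t => exp_deriv_main A Complex.I t
  have hPim' : ∀ t, Pim t = fromCols (X t * Φ₁) (-(Y t * Φ)) := by
    intro t; simp only [hPim t, hXdef, hYdef, neg_mul]
  set Q₁ : Matrix (Fin n) (Fin n) ℂ := Φ₁ * Φ₁ᴴ with hQ₁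
  set Q₂ : Matrix (Fin n) (Fin n) ℂ := Φ * Φᴴ with hQ₂
  set P : ℝ → Matrix (Fin n) (Fin n) ℂ :=
    fun t => X t * Q₁ * (X t)ᴴ + Y t * Q₂ * (Y t)ᴴ with hPdef
  set g : ℝ → Matrix (Fin n) (Fin n) ℂ :=
    fun t => Complex.I • (X t * Q₁ * (X t)ᴴ - Y t * Q₂ * (Y t)ᴴ) with hgdef
  have hPP : ∀ t, Pim t * (Pim t)ᴴ = P t := by
    intro t
    rw [hPim' t, conjTranspose_fromCols_eq_fromRows_conjTranspose,
      fromCols_mul_fromRows]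
    simp [hPdef, hQ₁, hQ₂, Matrix.conjTranspose_mul, Matrix.mul_assoc]
  have hPjP : ∀ t, Pim t * jm * (Pim t)ᴴ =
      X t * Q₁ * (X t)ᴴ - Y t * Q₂ * (Y t)ᴴ := by
    intro t
    rw [hPim' t, hj, fromCols_mul_fromBlocks,
      conjTranspose_fromCols_eq_fromRows_conjTranspose, fromCols_mul_fromRows]
    simp [hQ₁, hQ₂, Matrix.conjTranspose_mul, Matrix.mul_assoc, sub_eq_add_neg]
  have hgd : ∀ t, HasDerivAt g (A * P t - P t * Aᴴ) t := by
    intro t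
    have h1 : HasDerivAt (fun s => X s * Q₁ * (X s)ᴴ)
        ((((-Complex.I) • A * X t) * Q₁ + X t * 0) * (X t)ᴴ +
          (X t * Q₁) * ((-Complex.I) • A * X t)ᴴ) t :=
      hasDerivAt_matrix_mul
        (hasDerivAt_matrix_mul (hXd t) (hasDerivAt_const t Q₁))
        (hasDerivAt_conjTranspose (hXd t))
    have h2 : HasDerivAt (fun s => Y s * Q₂ * (Y s)ᴴ)
        (((Complex.I • A * Y t) * Q₂ + Y t * 0) * (Y t)ᴴ +
          (Y t * Q₂) * (Complex.I • A * Y t)ᴴ) t :=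
      hasDerivAt_matrix_mul
        (hasDerivAt_matrix_mul (hYd t) (hasDerivAt_const t Q₂))
        (hasDerivAt_conjTranspose (hYd t))
    have h3 := (h1.sub h2).const_smul Complex.I
    refine HasDerivAt.congr_deriv (f := g) h3 ?_
    simp only [Matrix.mul_zero, add_zero, Matrix.conjTranspose_neg,
      Matrix.conjTranspose_smul, Matrix.conjTranspose_mul, Complex.star_def,
      Complex.conj_I, Matrix.smul_mul, Matrix.mul_smul, smul_smul, smul_sub,
      smul_add, smul_neg, neg_smul, neg_neg, Complex.I_mul_I, one_smul,
      Matrix.mul_assoc, hPdef, Matrix.mul_add, Matrix.add_mul, neg_mul, mul_neg]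
    abel
  have hcX : Continuous X := continuous_iff_continuousAt.2 fun t => (hXd t).continuousAt
  have hcY : Continuous Y := continuous_iff_continuousAt.2 fun t => (hYd t).continuousAt
  have hcP : Continuous P := by
    rw [hPdef]
    exact (continuous_matrix_mul' (continuous_matrix_mul' hcX continuous_const)
        (continuous_matrix_conjTranspose' hcX)).add
      (continuous_matrix_mul' (continuous_matrix_mul' hcY continuous_const)
        (continuous_matrix_conjTranspose' hcY))
  let LA : Matrix (Fin n) (Fin n) ℂ →L[ℂ] Matrix (Fin n) (Fin n) ℂ :=
    LinearMap.toContinuousLinearMap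
      { toFun := fun Z => A * Z - Z * Aᴴ
        map_add' := fun Z W => by
          simp only [Matrix.mul_add, Matrix.add_mul]; abel
        map_smul' := fun c Z => by
          simp only [Matrix.mul_smul, Matrix.smul_mul, smul_sub, RingHom.id_apply] }
  have hLA : ∀ Z, LA Z = A * Z - Z * Aᴴ := fun Z => rfl
  have hintP := hcP.intervalIntegrable (μ := MeasureTheory.volume) 0 τ
  have hftc : (∫ s in (0:ℝ)..τ, LA (P s)) = g τ - g 0 := by
    apply intervalIntegral.integral_eq_sub_of_hasDerivAt
    · intro t _; rw [hLA]; exact hgd t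
    · exact (LA.continuous.comp hcP).intervalIntegrable _ _
  have hcomm : LA (∫ s in (0:ℝ)..τ, P s) = ∫ s in (0:ℝ)..τ, LA (P s) :=
    (ContinuousLinearMap.intervalIntegral_comp_comm LA hintP).symm
  have h0 : g 0 = A - Aᴴ := by
    have hX0 : X 0 = 1 := by
      rw [hXdef]
      norm_num
    have hY0 : Y 0 = 1 := by
      rw [hYdef]
      norm_num
    have hB : Bᴴ = Complex.I • (Φ₂ * Φ₂ᴴ) + B := sub_eq_iff_eq_add.mp hadm
    rw [hgdef]
    simp only [hX0, hY0, Matrix.one_mul, Matrix.mul_one, hQ₁, hQ₂, hΦ, hA]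
    rw [Matrix.conjTranspose_sub, Matrix.conjTranspose_mul, hB]
    simp only [Matrix.conjTranspose_add, Matrix.conjTranspose_smul, Complex.star_def,
      Complex.conj_I, Matrix.conjTranspose_conjTranspose, Matrix.add_mul, Matrix.mul_add,
      Matrix.smul_mul, Matrix.mul_smul, smul_add, smul_sub, smul_smul, neg_smul, smul_neg,
      Complex.I_mul_I, one_smul, neg_neg, mul_neg, neg_mul]
    simp only [Matrix.conjTranspose_one, Matrix.mul_one, Matrix.mul_smul, smul_smul,
      neg_smul, one_smul, neg_neg, Complex.I_mul_I, mul_neg, neg_mul, one_mul, mul_one,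
      smul_neg, neg_one_mul, Matrix.mul_neg, Matrix.neg_mul]
    module
  have hmain : A * Sig τ - Sig τ * Aᴴ = (A - Aᴴ) + LA (∫ s in (0:ℝ)..τ, P s) := by
    rw [hSig τ]
    simp only [hPP]
    rw [hLA]
    simp only [Matrix.mul_add, Matrix.add_mul, Matrix.mul_one, Matrix.one_mul]
    abel
  rw [hPjP τ]
  rw [hmain, hcomm, hftc, h0]
  rw [hgdef]
  abel
end
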